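/- The specific entropy is stationary along the 3-Lax curve at the base pressure: let γ > 1, c_v > 0 and let (ρ_R, p_R) be a base density and pressure, both positive, with φ the density function of the Lax-curve parametrisation based at (ρ_R, p_R). Then the entropy function S(σ) := c_v·ln(σ/φ(σ)^γ) has derivative S′(p_R) = 0 at σ = p_R. -/

import Mathlib

/-- The density function `φ` of the Lax-curve parametrisation. -/
noncomputable def laxPhi (γ ρ p : ℝ) (σ : ℝ) : ℝ :=
  if σ ≤ p then
    ρ * (σ / p) ^ (1 / γ)
  else
    ρ * (σ + ((γ - 1) / (γ + 1)) * p) / (((γ - 1) / (γ + 1)) * σ + p)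

/-- The specific entropy `S(σ) = c_v·ln(σ/φ(σ)^γ)` is stationary along the 3-Lax curve
at the base pressure: `S′(p_R) = 0`. -/
theorem lax3_entropy_deriv_at_base_eq_zero
    (γ cv : ℝ) (hγ : 1 < γ) (hcv : 0 < cv)
    (ρR pR : ℝ) (hρ : 0 < ρR) (hp : 0 < pR) :
    HasDerivAt (fun σ : ℝ => cv * Real.log (σ / laxPhi γ ρR pR σ ^ γ)) 0 pR := by
  set μ2 : ℝ := (γ - 1) / (γ + 1) with hμ2
  have hγ0 : (0:ℝ) < γ := by linarith
  have hγ1 : (0:ℝ) < γ + 1 := by linarith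
  have hμpos : 0 < μ2 := div_pos (by linarith) hγ1
  set S : ℝ → ℝ := fun σ : ℝ => cv * Real.log (σ / laxPhi γ ρR pR σ ^ γ) with hS
  -- S is constant on the rarefaction branch (0, pR]
  have hleftval : ∀ σ : ℝ, 0 < σ → σ ≤ pR → S σ = cv * Real.log (pR / ρR ^ γ) := by
    intro σ hσ hσp
    have hdp : 0 < σ / pR := div_pos hσ hp
    have hpow : ((σ / pR) ^ (1/γ)) ^ γ = σ / pR := by
      rw [← Real.rpow_mul hdp.le, one_div, inv_mul_cancel₀ hγ0.ne', Real.rpow_one]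
    have hφ : laxPhi γ ρR pR σ ^ γ = ρR ^ γ * (σ / pR) := by
      rw [laxPhi, if_pos hσp, Real.mul_rpow hρ.le (Real.rpow_nonneg hdp.le _), hpow]
    have hργ : (0:ℝ) < ρR ^ γ := Real.rpow_pos_of_pos hρ _
    simp only [hS, hφ]
    rw [show σ / (ρR ^ γ * (σ / pR)) = pR / ρR ^ γ by field_simp]
  -- the smooth extension of S on the shock branch
  set g : ℝ → ℝ := fun σ : ℝ =>
    cv * (Real.log σ - γ * Real.log ρR - γ * Real.log (σ + μ2 * pR)
      + γ * Real.log (μ2 * σ + pR)) with hg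
  have hrightval : ∀ σ : ℝ, pR ≤ σ → S σ = g σ := by
    intro σ hσp
    have hσ : 0 < σ := lt_of_lt_of_le hp hσp
    rcases eq_or_lt_of_le hσp with h | h
    · -- at the base point both expressions equal cv·log(pR/ρR^γ)
      subst h
      rw [hleftval pR hp le_rfl]
      have h1 : (0:ℝ) < pR + μ2 * pR := by positivity
      have hργ : (0:ℝ) < ρR ^ γ := Real.rpow_pos_of_pos hρ _
      simp only [hg]
      rw [Real.log_div hp.ne' hργ.ne', Real.log_rpow hρ]
      ring
    · have hne : ¬ σ ≤ pR := not_le.mpr h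
      have h1 : (0:ℝ) < σ + μ2 * pR := by positivity
      have h2 : (0:ℝ) < μ2 * σ + pR := by positivity
      have hφpos : 0 < ρR * (σ + μ2 * pR) / (μ2 * σ + pR) := by positivity
      simp only [hS, hg, laxPhi, if_neg hne, ← hμ2]
      rw [Real.log_div hσ.ne' (Real.rpow_pos_of_pos hφpos γ).ne',
        Real.log_rpow hφpos, Real.log_div (by positivity) h2.ne',
        Real.log_mul hρ.ne' h1.ne']
      ring
  -- left one-sided derivative is 0 (S is locally constant)
  have hleft : HasDerivWithinAt S 0 (Set.Iic pR) pR := by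
    have hc : HasDerivWithinAt (fun _ : ℝ => cv * Real.log (pR / ρR ^ γ)) 0
        (Set.Iic pR) pR := (hasDerivAt_const _ _).hasDerivWithinAt
    refine hc.congr_of_eventuallyEq ?_ (hleftval pR hp le_rfl)
    have hmem : Set.Ioi (0:ℝ) ∩ Set.Iic pR ∈ nhdsWithin pR (Set.Iic pR) :=
      Filter.inter_mem (nhdsWithin_le_nhds (Ioi_mem_nhds hp)) self_mem_nhdsWithin
    filter_upwards [hmem] with σ hσ
    exact hleftval σ hσ.1 hσ.2
  -- right one-sided derivative, via the smooth extension g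
  have h1 : (0:ℝ) < pR + μ2 * pR := by positivity
  have h2 : (0:ℝ) < μ2 * pR + pR := by positivity
  have hgderiv : HasDerivAt g (cv * (pR⁻¹ - γ * (1 / (pR + μ2 * pR))
      + γ * (μ2 * 1 / (μ2 * pR + pR)))) pR := by
    have d1 : HasDerivAt (fun σ : ℝ => Real.log σ) pR⁻¹ pR := Real.hasDerivAt_log hp.ne'
    have d2 : HasDerivAt (fun σ : ℝ => Real.log (σ + μ2 * pR)) (1 / (pR + μ2 * pR)) pR :=
      ((hasDerivAt_id pR).add_const (μ2 * pR)).log h1.ne'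
    have d3 : HasDerivAt (fun σ : ℝ => Real.log (μ2 * σ + pR)) (μ2 * 1 / (μ2 * pR + pR)) pR :=
      (((hasDerivAt_id pR).const_mul μ2).add_const pR).log h2.ne'
    exact (((d1.sub_const (γ * Real.log ρR)).sub (d2.const_mul γ)).add
      (d3.const_mul γ)).const_mul cv
  have hDzero : cv * (pR⁻¹ - γ * (1 / (pR + μ2 * pR)) + γ * (μ2 * 1 / (μ2 * pR + pR))) = 0 := by
    have : pR⁻¹ - γ * (1 / (pR + μ2 * pR)) + γ * (μ2 * 1 / (μ2 * pR + pR)) = 0 := by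
      rw [hμ2]
      field_simp [hp.ne', hγ0.ne']
      ring
    rw [this, mul_zero]
  have hright : HasDerivWithinAt S 0 (Set.Ici pR) pR := by
    have hg' : HasDerivWithinAt g 0 (Set.Ici pR) pR := by
      rw [← hDzero]; exact hgderiv.hasDerivWithinAt
    refine hg'.congr_of_eventuallyEq ?_ (hrightval pR le_rfl)
    filter_upwards [self_mem_nhdsWithin] with σ hσ
    exact hrightval σ hσ
  have := hleft.union hright
  rw [Set.Iic_union_Ici] at this
  exact this.hasDerivAt (by simp)
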